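/- Let f : ℝ^d → ℝ be convex and twice continuously differentiable with L-Lipschitz gradient and H-Lipschitz Hessian. Fix x̃ ∈ ℝ^d, λ > 0, and constants 0 < σ_u < σ < 1. Let f_{x̃}(y) = f(x̃) + ⟨∇f(x̃), y − x̃⟩ + ½⟨∇²f(x̃)(y − x̃), y − x̃⟩, g(y) = f_{x̃}(y) + (1/(2λ))‖y − x̃‖², and g* = min_y g(y). Suppose y' satisfies g(y') − g* ≤ ε_B and λ ‖y' − x̃‖ ≤ 2σ_u/H, where ε_B < ((σ − σ_u)² / (2λ (Lλ + 1 + (σ − σ_u)²)(L + 1/λ))) · (f(x̃) − g*). Then ‖λ ∇f(y') + y' − x̃‖² ≤ σ² ‖y' − x̃‖². -/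

import Mathlib

open scoped BigOperators

open Set InnerProductSpace
open scoped RealInnerProductSpace
set_option maxHeartbeats 2000000

section aux

lemma taylor_grad_bound {E F : Type*} [NormedAddCommGroup E] [NormedSpace ℝ E]
    [NormedAddCommGroup F] [NormedSpace ℝ F]
    (f : E → F) (hf : ContDiff ℝ 2 f) (H : ℝ)
    (hhess : ∀ u v, ‖fderiv ℝ (fderiv ℝ f) u - fderiv ℝ (fderiv ℝ f) v‖ ≤ H * ‖u - v‖)
    (x y : E) :
    ‖fderiv ℝ f y - fderiv ℝ f x - fderiv ℝ (fderiv ℝ f) x (y - x)‖ ≤ H / 2 * ‖y - x‖ ^ 2 := by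
  set r := y - x with hrdef
  set f1 := fderiv ℝ f with hf1def
  set Bm := fderiv ℝ f1 with hBmdef
  have hf1c : ContDiff ℝ 1 f1 := hf.fderiv_right (by norm_num)
  have hf1d : Differentiable ℝ f1 := hf1c.differentiable one_ne_zero
  set φ : ℝ → (E →L[ℝ] F) := fun t => f1 (x + t • r) - f1 x - t • (Bm x r) with hφdef
  have key : ∀ t : ℝ, HasDerivAt φ (Bm (x + t • r) r - Bm x r) t := by
    intro t
    have h1 : HasDerivAt (fun t : ℝ => x + t • r) r t := by
      simpa using ((hasDerivAt_id t).smul_const r).const_add x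
    have h2 : HasFDerivAt f1 (Bm (x + t • r)) (x + t • r) := (hf1d _).hasFDerivAt
    have h3 : HasDerivAt (fun t : ℝ => f1 (x + t • r)) (Bm (x + t • r) r) t :=
      h2.comp_hasDerivAt t h1
    have h4 : HasDerivAt (fun t : ℝ => t • (Bm x r)) (Bm x r) t := by
      simpa using (hasDerivAt_id t).smul_const (Bm x r)
    exact (h3.sub_const (f1 x)).sub h4
  have hB : ∀ t : ℝ, HasDerivAt (fun t : ℝ => H / 2 * ‖r‖ ^ 2 * t ^ 2) (H * ‖r‖ ^ 2 * t) t := by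
    intro t
    have := (hasDerivAt_pow 2 t).const_mul (H / 2 * ‖r‖ ^ 2)
    refine this.congr_deriv ?_
    push_cast
    ring
  have bound : ∀ t ∈ Ico (0 : ℝ) 1, ‖Bm (x + t • r) r - Bm x r‖ ≤ H * ‖r‖ ^ 2 * t := by
    intro t ht
    have h1 : Bm (x + t • r) r - Bm x r = (Bm (x + t • r) - Bm x) r := by
      simp [ContinuousLinearMap.sub_apply]
    rw [h1]
    have h2 : ‖(Bm (x + t • r) - Bm x) r‖ ≤ ‖Bm (x + t • r) - Bm x‖ * ‖r‖ :=
      (Bm (x + t • r) - Bm x).le_opNorm r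
    have h3 : ‖Bm (x + t • r) - Bm x‖ ≤ H * ‖t • r‖ := by
      simpa using hhess (x + t • r) x
    have h4 : ‖t • r‖ = t * ‖r‖ := by
      rw [norm_smul, Real.norm_eq_abs, abs_of_nonneg ht.1]
    rw [h4] at h3
    nlinarith [mul_le_mul_of_nonneg_right h3 (norm_nonneg r), norm_nonneg r]
  have main := image_norm_le_of_norm_deriv_right_le_deriv_boundary
    (f := φ) (f' := fun t => Bm (x + t • r) r - Bm x r)
    (fun t _ => (key t).continuousAt.continuousWithinAt)
    (fun t _ => (key t).hasDerivWithinAt)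
    (by simp [hφdef]) hB bound (right_mem_Icc.mpr zero_le_one)
  have hφ1 : φ 1 = fderiv ℝ f y - fderiv ℝ f x - fderiv ℝ (fderiv ℝ f) x (y - x) := by
    simp [hφdef, hrdef, hf1def, hBmdef]
  rw [← hφ1]
  simpa using main

end aux

lemma stmt15_arith (lam t K M εB a ρ A : ℝ) (hlam : 0 < lam) (ht : 0 < t) (hK1 : 1 < K)
    (hM : 0 < M) (hlamM : lam * M = K) (hεB0 : 0 ≤ εB)
    (ha : 0 ≤ a) (hρ : 0 ≤ ρ)
    (h1 : (lam * a) ^ 2 ≤ 2 * lam * K * εB)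
    (hupper : A ≤ εB + a * ρ + M / 2 * ρ ^ 2)
    (h3 : εB * (2 * lam * (K + t ^ 2) * M) < t ^ 2 * A) :
    (lam * a) ^ 2 ≤ t ^ 2 * ρ ^ 2 := by
  set s := lam * a with hs
  have hs0 : 0 ≤ s := by positivity
  by_contra hc
  push_neg at hc
  have hspos : 0 < s := by nlinarith [sq_nonneg (t * ρ), hc, hs0]
  have hla : t * ρ < s := by
    by_contra hc2
    push_neg at hc2
    nlinarith [hc, mul_nonneg ht.le hρ, hs0]
  have e1 : εB * (2 * lam * (K + t ^ 2) * M) = 2 * (K + t ^ 2) * εB * (lam * M) := by ring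
  rw [e1, hlamM] at h3
  have h6a : lam * (2 * (K + t ^ 2) * εB * K)
      < lam * (t ^ 2 * (εB + a * ρ + M / 2 * ρ ^ 2)) :=
    mul_lt_mul_of_pos_left (h3.trans_le (mul_le_mul_of_nonneg_left hupper (sq_nonneg t))) hlam
  have e2 : lam * (t ^ 2 * (εB + a * ρ + M / 2 * ρ ^ 2))
      = t ^ 2 * (lam * εB) + t ^ 2 * s * ρ + (t ^ 2 * ρ ^ 2) * (lam * M) / 2 := by
    rw [hs]; ring
  rw [e2, hlamM] at h6a
  have hst : t ^ 2 * s * ρ ≤ t * s ^ 2 := by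
    nlinarith [mul_le_mul_of_nonneg_left hla.le (mul_nonneg ht.le hs0)]
  have h9 : t * s ^ 2 ≤ t * (2 * lam * K * εB) := mul_le_mul_of_nonneg_left h1 ht.le
  have h10 : K / 2 * (t ^ 2 * ρ ^ 2) ≤ K / 2 * s ^ 2 :=
    mul_le_mul_of_nonneg_left hc.le (by positivity)
  have h11 : K / 2 * s ^ 2 ≤ K / 2 * (2 * lam * K * εB) :=
    mul_le_mul_of_nonneg_left h1 (by positivity)
  have hcoef : 0 ≤ (K - t) ^ 2 + 2 * (K - 1) * t ^ 2 := by
    nlinarith [sq_nonneg (K - t), sq_nonneg t]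
  have h12 : 0 ≤ lam * εB * ((K - t) ^ 2 + 2 * (K - 1) * t ^ 2) :=
    mul_nonneg (mul_nonneg hlam.le hεB0) hcoef
  nlinarith [h6a, hst, h9, h10, h11, h12]

lemma sq_le_imp_le (x y : ℝ) (hx : 0 ≤ x) (hy : 0 ≤ y) (h : x ^ 2 ≤ y ^ 2) : x ≤ y := by
  nlinarith



/-- Accuracy of an inexact solution of the regularized
second-order subproblem in the large-step A-NPE method: if `y'` is an
`ε_B`-approximate minimizer of `g(y) = f_{x̃}(y) + ‖y − x̃‖²/(2λ)` with
`λ‖y' − x̃‖ ≤ 2σ_u/H` and `ε_B` small enough, then `y'` satisfies the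
relative-error proximal condition `‖λ∇f(y') + y' − x̃‖² ≤ σ²‖y' − x̃‖²`. -/
theorem stmt_15 (d : ℕ) (f : EuclideanSpace ℝ (Fin d) → ℝ) (hf : ContDiff ℝ 2 f)
    (hconv : ConvexOn ℝ Set.univ f)
    (L H : ℝ) (hL : 0 < L) (hH : 0 < H)
    (hgrad : ∀ u v, ‖fderiv ℝ f u - fderiv ℝ f v‖ ≤ L * ‖u - v‖)
    (hhess : ∀ u v, ‖fderiv ℝ (fderiv ℝ f) u - fderiv ℝ (fderiv ℝ f) v‖ ≤ H * ‖u - v‖)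
    (xt : EuclideanSpace ℝ (Fin d)) (lam : ℝ) (hlam : 0 < lam)
    (σu σ : ℝ) (hσu0 : 0 < σu) (hσuσ : σu < σ) (hσ1 : σ < 1)
    (g : EuclideanSpace ℝ (Fin d) → ℝ)
    (hg : ∀ z, g z = f xt + fderiv ℝ f xt (z - xt)
      + (1 / 2) * fderiv ℝ (fderiv ℝ f) xt (z - xt) (z - xt)
      + 1 / (2 * lam) * ‖z - xt‖ ^ 2)
    (ymin : EuclideanSpace ℝ (Fin d)) (hymin : ∀ z, g ymin ≤ g z)
    (y' : EuclideanSpace ℝ (Fin d)) (εB : ℝ)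
    (hy1 : g y' - g ymin ≤ εB)
    (hy2 : lam * ‖y' - xt‖ ≤ 2 * σu / H)
    (hεB : εB < (σ - σu) ^ 2 / (2 * lam * (L * lam + 1 + (σ - σu) ^ 2) * (L + 1 / lam))
      * (f xt - g ymin)) :
    ‖lam • gradient f y' + (y' - xt)‖ ^ 2 ≤ σ ^ 2 * ‖y' - xt‖ ^ 2 := by
  have hfd : Differentiable ℝ f := hf.differentiable two_ne_zero
  have hf1c : ContDiff ℝ 1 (fderiv ℝ f) := hf.fderiv_right (by norm_num)
  set B2 : EuclideanSpace ℝ (Fin d) →L[ℝ] EuclideanSpace ℝ (Fin d) →L[ℝ] ℝ := fderiv ℝ (fderiv ℝ f) xt with hB2def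
  have hBsymm : ∀ u v, B2 u v = B2 v u := fun u v =>
    second_derivative_symmetric (fun z => (hfd z).hasFDerivAt)
      ((hf1c.differentiable one_ne_zero xt).hasFDerivAt) u v
  -- ‖B2‖ ≤ L
  have hlip : LipschitzWith ⟨L, hL.le⟩ (fderiv ℝ f) :=
    LipschitzWith.of_dist_le_mul (fun u v => by rw [dist_eq_norm, dist_eq_norm]; exact hgrad u v)
  have hBL : ‖B2‖ ≤ L := norm_fderiv_le_of_lipschitz ℝ hlip
  have hBuu : ∀ u : EuclideanSpace ℝ (Fin d), B2 u u ≤ L * ‖u‖ ^ 2 := by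
    intro u
    have h1 : B2 u u ≤ ‖B2 u u‖ := le_abs_self _
    have h2 : ‖B2 u u‖ ≤ ‖B2 u‖ * ‖u‖ := (B2 u).le_opNorm u
    have h3 : ‖B2 u‖ ≤ ‖B2‖ * ‖u‖ := B2.le_opNorm u
    nlinarith [norm_nonneg u, norm_nonneg (B2 u), norm_nonneg B2]
  set r : EuclideanSpace ℝ (Fin d) := y' - xt with hrdef
  set D := InnerProductSpace.toDual ℝ (EuclideanSpace ℝ (Fin d)) with hDdef
  set ℓ : EuclideanSpace ℝ (Fin d) →L[ℝ] ℝ := fderiv ℝ f xt + B2 r + (1 / lam) • (D r) with hℓdef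
  have hℓapp : ∀ v, ℓ v = fderiv ℝ f xt v + B2 r v + (1 / lam) * ⟪r, v⟫ := by
    intro v
    simp only [hℓdef, hDdef, ContinuousLinearMap.add_apply, ContinuousLinearMap.coe_smul',
      Pi.smul_apply, toDual_apply_apply, smul_eq_mul]
  -- expansion identity
  have hexp : ∀ w z : EuclideanSpace ℝ (Fin d), g z = g w +
      (fderiv ℝ f xt (z - w) + B2 (w - xt) (z - w) + (1 / lam) * ⟪w - xt, z - w⟫)
      + ((1 / 2) * B2 (z - w) (z - w) + 1 / (2 * lam) * ‖z - w‖ ^ 2) := by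
    intro w z
    have hz : z - xt = (w - xt) + (z - w) := by abel
    rw [hg z, hg w, hz]
    simp only [map_add, ContinuousLinearMap.add_apply]
    rw [norm_add_sq_real, hBsymm (z - w) (w - xt)]
    ring
  have hεB0 : 0 ≤ εB := le_trans (by linarith [hymin y']) hy1
  have hfxt : g xt = f xt := by
    rw [hg xt]
    simp
  set M : ℝ := L + 1 / lam with hMdef
  have hM : 0 < M := by positivity
  set lv : EuclideanSpace ℝ (Fin d) := D.symm ℓ with hlvdef
  have hlv : ∀ v, ⟪lv, v⟫ = ℓ v := fun v => toDual_symm_apply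
  have hlvnorm : ‖lv‖ = ‖ℓ‖ := D.symm.norm_map ℓ
  -- descent step: ‖ℓ‖² ≤ 2 M εB
  have hℓsq : ‖ℓ‖ ^ 2 ≤ 2 * M * εB := by
    have h := hexp y' (y' + (-(1 / M)) • lv)
    have hv : y' + (-(1 / M)) • lv - y' = (-(1 / M)) • lv := by abel
    rw [hv] at h
    have hball : fderiv ℝ f xt ((-(1 / M)) • lv) + B2 (y' - xt) ((-(1 / M)) • lv)
        + (1 / lam) * ⟪y' - xt, (-(1 / M)) • lv⟫ = -(1 / M) * ‖ℓ‖ ^ 2 := by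
      have h1 : ℓ ((-(1 / M)) • lv) = -(1 / M) * ‖ℓ‖ ^ 2 := by
        rw [← hlv, inner_smul_right, real_inner_self_eq_norm_sq, hlvnorm]
      rw [← h1, hℓapp, real_inner_comm]
    rw [← hrdef] at hball
    rw [hball] at h
    have hquad : (1 / 2) * B2 ((-(1 / M)) • lv) ((-(1 / M)) • lv)
        + 1 / (2 * lam) * ‖(-(1 / M)) • lv‖ ^ 2 ≤ M / 2 * ((1 / M) ^ 2 * ‖ℓ‖ ^ 2) := by
      have h1 := hBuu ((-(1 / M)) • lv)
      have h2 : ‖(-(1 / M)) • lv‖ ^ 2 = (1 / M) ^ 2 * ‖ℓ‖ ^ 2 := by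
        rw [norm_smul, Real.norm_eq_abs, hlvnorm, mul_pow, abs_neg, abs_of_nonneg (by positivity : (0:ℝ) ≤ 1 / M), ]
      rw [h2] at h1 ⊢
      have key : M / 2 * ((1 / M) ^ 2 * ‖ℓ‖ ^ 2) = (L / 2) * ((1 / M) ^ 2 * ‖ℓ‖ ^ 2)
          + (1 / (2 * lam)) * ((1 / M) ^ 2 * ‖ℓ‖ ^ 2) := by rw [hMdef]; ring
      linarith [h1, key]
    have hmin := hymin (y' + (-(1 / M)) • lv)
    have hMne : M ≠ 0 := hM.ne'
    have : g ymin ≤ g y' - ‖ℓ‖ ^ 2 / (2 * M) := by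
      rw [h] at hmin
      have : -(1 / M) * ‖ℓ‖ ^ 2 + M / 2 * ((1 / M) ^ 2 * ‖ℓ‖ ^ 2) = -(‖ℓ‖ ^ 2 / (2 * M)) := by
        field_simp
        ring
      linarith [hquad, hmin, this]
    have h2M : 0 < 2 * M := by positivity
    have h13 : ‖ℓ‖ ^ 2 / (2 * M) ≤ εB := by linarith
    rw [div_le_iff₀ h2M] at h13
    linarith
  -- upper bound on f xt - g ymin
  have hupper : f xt - g ymin ≤ εB + ‖ℓ‖ * ‖r‖ + M / 2 * ‖r‖ ^ 2 := by
    have h := hexp y' xt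
    rw [← hrdef, hfxt] at h
    have hxtr : xt - y' = -r := by rw [hrdef]; abel
    rw [hxtr] at h
    have hlin : fderiv ℝ f xt (-r) + B2 r (-r) + (1 / lam) * ⟪r, -r⟫ = ℓ (-r) := by
      rw [hℓapp]
    rw [hlin] at h
    have h1 : ℓ (-r) ≤ ‖ℓ‖ * ‖r‖ := by
      calc ℓ (-r) ≤ ‖ℓ (-r)‖ := le_abs_self _
      _ ≤ ‖ℓ‖ * ‖(-r : EuclideanSpace ℝ (Fin d))‖ := ℓ.le_opNorm _
      _ = ‖ℓ‖ * ‖r‖ := by rw [norm_neg]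
    have h2 : (1 / 2) * B2 (-r) (-r) + 1 / (2 * lam) * ‖(-r : EuclideanSpace ℝ (Fin d))‖ ^ 2 ≤ M / 2 * ‖r‖ ^ 2 := by
      have := hBuu (-r)
      rw [norm_neg] at this ⊢
      have key : M / 2 * ‖r‖ ^ 2 = (L / 2) * ‖r‖ ^ 2 + (1 / (2 * lam)) * ‖r‖ ^ 2 := by
        rw [hMdef]; ring
      linarith [this, key]
    nlinarith [hy1]
  -- arithmetic: (lam ‖ℓ‖)² ≤ (σ - σu)² ‖r‖²
  set t : ℝ := σ - σu with htdef
  have ht : 0 < t := by simp [htdef]; linarith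
  have ht1 : t < 1 := by simp [htdef]; linarith
  set K : ℝ := L * lam + 1 with hKdef
  have hK1 : 1 < K := by simp [hKdef]; positivity
  have hlamM : lam * M = K := by
    rw [hMdef, hKdef]
    field_simp
  set s : ℝ := lam * ‖ℓ‖ with hsdef
  have hs0 : 0 ≤ s := by positivity
  have hρ0 : 0 ≤ ‖r‖ := norm_nonneg r
  have h1 : s ^ 2 ≤ 2 * lam * K * εB := by
    have : s ^ 2 = lam * (lam * ‖ℓ‖ ^ 2) := by rw [hsdef]; ring
    rw [this]
    calc lam * (lam * ‖ℓ‖ ^ 2) ≤ lam * (lam * (2 * M * εB)) := by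
          apply mul_le_mul_of_nonneg_left _ hlam.le
          exact mul_le_mul_of_nonneg_left hℓsq hlam.le
      _ = 2 * lam * K * εB := by rw [← hlamM]; ring
  have hDm : 0 < 2 * lam * (K + t ^ 2) * M := by positivity
  have h3 : εB * (2 * lam * (K + t ^ 2) * M) < t ^ 2 * (f xt - g ymin) := by
    rw [div_mul_eq_mul_div, lt_div_iff₀ hDm] at hεB
    exact hεB
  have hs2 : s ^ 2 ≤ t ^ 2 * ‖r‖ ^ 2 := by
    rw [hsdef]
    exact stmt15_arith lam t K M εB ‖ℓ‖ ‖r‖ (f xt - g ymin) hlam ht hK1 hM hlamM hεB0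
      (norm_nonneg ℓ) hρ0 (by rw [← hsdef]; exact h1) hupper h3
  -- final assembly
  have hsle : s ≤ t * ‖r‖ := by
    refine sq_le_imp_le _ _ hs0 (mul_nonneg ht.le hρ0) ?_
    calc s ^ 2 ≤ t ^ 2 * ‖r‖ ^ 2 := hs2
      _ = (t * ‖r‖) ^ 2 := by ring
  set Et : EuclideanSpace ℝ (Fin d) →L[ℝ] ℝ := fderiv ℝ f y' - fderiv ℝ f xt - B2 r with hEtdef
  have hEt : ‖Et‖ ≤ H / 2 * ‖r‖ ^ 2 := taylor_grad_bound f hf H hhess xt y'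
  have hgradrep : lam • gradient f y' + r = D.symm (lam • Et + lam • ℓ) := by
    have h1 : lam • Et + lam • ℓ = lam • (fderiv ℝ f y') + D r := by
      rw [hEtdef, hℓdef]
      have h2 : lam • ((1 / lam : ℝ) • (D r)) = D r := by
        rw [smul_smul, mul_one_div, div_self hlam.ne']
        exact one_smul _ _
      rw [smul_sub, smul_sub, smul_add, smul_add, h2]
      abel
    rw [h1]
    have : gradient f y' = D.symm (fderiv ℝ f y') := rfl
    rw [this]
    simp only [map_add, map_smul]
    congr 1
    rw [LinearIsometryEquiv.symm_apply_apply]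
  have hnorm1 : ‖lam • gradient f y' + r‖ ≤ lam * ‖Et‖ + s := by
    rw [hgradrep, D.symm.norm_map, hsdef]
    calc ‖lam • Et + lam • ℓ‖ ≤ ‖lam • Et‖ + ‖lam • ℓ‖ := norm_add_le _ _
      _ = lam * ‖Et‖ + lam * ‖ℓ‖ := by
          rw [norm_smul_of_nonneg (x := Et) hlam.le, norm_smul_of_nonneg (x := ℓ) hlam.le]
  have hEbound : lam * ‖Et‖ ≤ σu * ‖r‖ := by
    have h1 : lam * ‖Et‖ ≤ lam * (H / 2 * ‖r‖ ^ 2) := mul_le_mul_of_nonneg_left hEt hlam.le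
    have h2 : H * (lam * ‖r‖) ≤ 2 * σu := by
      rw [← le_div_iff₀' hH]
      exact hy2
    nlinarith [norm_nonneg Et]
  have hfinal : ‖lam • gradient f y' + r‖ ≤ σ * ‖r‖ := by
    have : σu * ‖r‖ + t * ‖r‖ = σ * ‖r‖ := by rw [htdef]; ring
    linarith [hnorm1, hEbound, hsle]
  calc ‖lam • gradient f y' + r‖ ^ 2 ≤ (σ * ‖r‖) ^ 2 :=
        pow_le_pow_left₀ (norm_nonneg _) hfinal 2
    _ = σ ^ 2 * ‖r‖ ^ 2 := by ring
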